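/- Let Φ be the standard normal CDF and let logit(x) = log(x) - log(1-x). For constants a > 0 and b ∈ ℝ, the function h(n) = logit(Φ(a·√n + b)) satisfies lim_{n→∞} dh/dn = a²/2. -/

import Mathlib

open Filter Real

/-- Standard normal CDF. -/
noncomputable def stdNormalCDF (z : ℝ) : ℝ :=
  ∫ t in Set.Iic z, Real.exp (-t ^ 2 / 2) / Real.sqrt (2 * Real.pi)

/-- Logit function. -/
noncomputable def logit (x : ℝ) : ℝ := Real.log x - Real.log (1 - x)

open MeasureTheory Set

noncomputable def phiPDF (t : ℝ) : ℝ := Real.exp (-t ^ 2 / 2) / Real.sqrt (2 * Real.pi)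

lemma phiPDF_pos (t : ℝ) : 0 < phiPDF t :=
  div_pos (Real.exp_pos _) (Real.sqrt_pos.2 (by positivity))

lemma continuous_phiPDF : Continuous phiPDF := by
  unfold phiPDF; fun_prop

lemma phiPDF_eq (t : ℝ) : phiPDF t = (Real.sqrt (2 * Real.pi))⁻¹ * Real.exp (-(1/2 : ℝ) * t ^ 2) := by
  unfold phiPDF; rw [div_eq_inv_mul]; ring_nf

lemma integrable_phiPDF : Integrable phiPDF := by
  simp only [funext phiPDF_eq]
  exact (integrable_exp_neg_mul_sq (by norm_num)).const_mul _

lemma integral_phiPDF : ∫ t, phiPDF t = 1 := by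
  simp only [funext phiPDF_eq]
  rw [integral_const_mul, integral_gaussian]
  rw [inv_mul_eq_div, div_eq_one_iff_eq (by positivity)]
  rw [show Real.pi / (1/2) = 2 * Real.pi by ring]

lemma hasDerivAt_phiPDF (t : ℝ) : HasDerivAt phiPDF (-t * phiPDF t) t := by
  have h1 : HasDerivAt (fun t : ℝ => -t ^ 2 / 2) (-t) t := by
    have := ((hasDerivAt_pow 2 t).neg).div_const 2
    exact this.congr_deriv (by norm_num; ring)
  have h2 := (h1.exp).div_const (Real.sqrt (2 * Real.pi))
  exact h2.congr_deriv (by unfold phiPDF; ring)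

noncomputable def gTail (z : ℝ) : ℝ := ∫ t in Set.Ioi z, phiPDF t

lemma cdf_eq (z : ℝ) : stdNormalCDF z = ∫ t in Set.Iic z, phiPDF t := rfl

lemma cdf_pos (z : ℝ) : 0 < stdNormalCDF z := by
  rw [cdf_eq]
  rw [setIntegral_pos_iff_support_of_nonneg_ae]
  · have : Function.support phiPDF = Set.univ := by
      ext t; simp [(phiPDF_pos t).ne']
    rw [this, Set.univ_inter]
    simp [Real.volume_Iic]
  · exact Filter.Eventually.of_forall fun t => (phiPDF_pos t).le
  · exact integrable_phiPDF.integrableOn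

lemma gTail_pos (z : ℝ) : 0 < gTail z := by
  rw [gTail]
  rw [setIntegral_pos_iff_support_of_nonneg_ae]
  · have : Function.support phiPDF = Set.univ := by
      ext t; simp [(phiPDF_pos t).ne']
    rw [this, Set.univ_inter]
    simp [Real.volume_Ioi]
  · exact Filter.Eventually.of_forall fun t => (phiPDF_pos t).le
  · exact integrable_phiPDF.integrableOn

lemma one_sub_cdf (z : ℝ) : 1 - stdNormalCDF z = gTail z := by
  have := intervalIntegral.integral_Iic_add_Ioi (b := z)
    integrable_phiPDF.integrableOn integrable_phiPDF.integrableOn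
  rw [cdf_eq, gTail, sub_eq_iff_eq_add, ← integral_phiPDF, ← this]
  ring
  
lemma cdf_lt_one (z : ℝ) : stdNormalCDF z < 1 := by
  have := gTail_pos z
  rw [← one_sub_cdf] at this; linarith

lemma hasDerivAt_cdf (z : ℝ) : HasDerivAt stdNormalCDF (phiPDF z) z := by
  have key : ∀ w : ℝ, stdNormalCDF w = stdNormalCDF 0 + ∫ t in (0:ℝ)..w, phiPDF t := by
    intro w
    rw [← intervalIntegral.integral_Iic_sub_Iic integrable_phiPDF.integrableOn
      integrable_phiPDF.integrableOn, cdf_eq, cdf_eq]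
    ring
  have h := intervalIntegral.integral_hasDerivAt_right (a := (0:ℝ)) (b := z)
    (integrable_phiPDF.intervalIntegrable)
    continuous_phiPDF.stronglyMeasurable.stronglyMeasurableAtFilter
    continuous_phiPDF.continuousAt
  have h2 := h.const_add (stdNormalCDF 0)
  exact h2.congr_of_eventuallyEq (Filter.Eventually.of_forall fun w => key w)

lemma integrableOn_mul_phi (z : ℝ) : IntegrableOn (fun t => t * phiPDF t) (Set.Ioi z) := by
  have h1 : Integrable (fun t : ℝ => (Real.sqrt (2 * Real.pi))⁻¹ * (t * Real.exp (-(1/2:ℝ) * t ^ 2))) :=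
    (integrable_mul_exp_neg_mul_sq (by norm_num)).const_mul _
  have h2 : (fun t : ℝ => t * phiPDF t)
      = fun t : ℝ => (Real.sqrt (2 * Real.pi))⁻¹ * (t * Real.exp (-(1/2:ℝ) * t ^ 2)) := by
    funext t; rw [phiPDF_eq]; ring
  rw [h2]; exact h1.integrableOn

lemma tendsto_phiPDF : Tendsto phiPDF atTop (nhds 0) := by
  have h1 : Tendsto (fun t : ℝ => -t ^ 2 / 2) atTop atBot := by
    apply Tendsto.atBot_div_const (by norm_num : (0:ℝ) < 2)
    exact tendsto_neg_atBot_iff.mpr (tendsto_pow_atTop two_ne_zero)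
  have h2 := (Real.tendsto_exp_atBot.comp h1).div_const (Real.sqrt (2 * Real.pi))
  rw [zero_div] at h2
  exact h2

lemma integral_mul_phi (z : ℝ) : ∫ t in Set.Ioi z, t * phiPDF t = phiPDF z := by
  have h := MeasureTheory.integral_Ioi_of_hasDerivAt_of_tendsto
    (f := fun t => -phiPDF t) (f' := fun t => t * phiPDF t) (a := z) (m := 0)
    (continuous_phiPDF.neg.continuousWithinAt)
    (fun t _ => by have := (hasDerivAt_phiPDF t).neg; simp only [neg_mul, neg_neg] at this; exact this)
    (integrableOn_mul_phi z)
    (by simpa using tendsto_phiPDF.neg)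
  simpa using h

lemma integrableOn_phi_div_sq {z : ℝ} (hz : 0 < z) :
    IntegrableOn (fun t => phiPDF t / t ^ 2) (Set.Ioi z) := by
  apply Integrable.mono ((integrable_phiPDF.div_const (z ^ 2)).integrableOn)
  · refine ContinuousOn.aestronglyMeasurable ?_ measurableSet_Ioi
    exact continuous_phiPDF.continuousOn.div (continuous_pow 2).continuousOn
      (fun t ht => pow_ne_zero _ (lt_trans hz ht).ne')
  · filter_upwards [MeasureTheory.ae_restrict_mem measurableSet_Ioi] with t ht
    have htz : z < t := ht
    rw [Real.norm_eq_abs, Real.norm_eq_abs,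
      abs_of_nonneg (div_nonneg (phiPDF_pos t).le (sq_nonneg t)),
      abs_of_nonneg (div_nonneg (phiPDF_pos t).le (by positivity))]
    exact div_le_div_of_nonneg_left (phiPDF_pos t).le (by positivity)
      (pow_le_pow_left₀ hz.le htz.le 2)

set_option maxHeartbeats 1000000 in
lemma integral_phi_add {z : ℝ} (hz : 0 < z) :
    gTail z + ∫ t in Set.Ioi z, phiPDF t / t ^ 2 = phiPDF z / z := by
  have hderiv : ∀ t ∈ Set.Ioi z, HasDerivAt (fun t => -phiPDF t / t)
      (phiPDF t + phiPDF t / t ^ 2) t := by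
    intro t ht
    have htz : (0:ℝ) < t := lt_trans hz ht
    have hd := ((hasDerivAt_phiPDF t).neg).div (hasDerivAt_id t) htz.ne'
    exact hd.congr_deriv (by simp only [id, Pi.neg_apply]; field_simp; ring)
  have hcont : ContinuousWithinAt (fun t => -phiPDF t / t) (Set.Ici z) z :=
    ((continuous_phiPDF.neg.continuousAt.div continuousAt_id hz.ne')).continuousWithinAt
  have hint : IntegrableOn (fun t => phiPDF t + phiPDF t / t ^ 2) (Set.Ioi z) :=
    (integrable_phiPDF.integrableOn).add (integrableOn_phi_div_sq hz)
  have htend : Tendsto (fun t => -phiPDF t / t) atTop (nhds 0) := by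
    simpa using (tendsto_phiPDF.neg).div_atTop tendsto_id
  have h := MeasureTheory.integral_Ioi_of_hasDerivAt_of_tendsto hcont hderiv hint htend
  rw [MeasureTheory.integral_add integrable_phiPDF.integrableOn (integrableOn_phi_div_sq hz)] at h
  rw [gTail]
  rw [h]
  field_simp
  ring

lemma tail_le {z : ℝ} (hz : 0 < z) : gTail z ≤ phiPDF z / z := by
  have h1 : gTail z ≤ ∫ t in Set.Ioi z, t * phiPDF t / z := by
    rw [gTail]
    apply setIntegral_mono_on integrable_phiPDF.integrableOn
      ((integrableOn_mul_phi z).div_const z) measurableSet_Ioi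
    intro t ht
    rw [le_div_iff₀ hz]
    have := mul_le_mul_of_nonneg_left (le_of_lt (ht : z < t)) (phiPDF_pos t).le
    nlinarith
  calc gTail z ≤ ∫ t in Set.Ioi z, t * phiPDF t / z := h1
    _ = (∫ t in Set.Ioi z, t * phiPDF t) / z := by rw [integral_div]
    _ = phiPDF z / z := by rw [integral_mul_phi]

lemma le_tail {z : ℝ} (hz : 0 < z) : z * phiPDF z / (1 + z ^ 2) ≤ gTail z := by
  set I := ∫ t in Set.Ioi z, phiPDF t / t ^ 2 with hI
  have key := integral_phi_add hz
  have h2 : I ≤ gTail z / z ^ 2 := by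
    have : I ≤ ∫ t in Set.Ioi z, phiPDF t / z ^ 2 := by
      apply setIntegral_mono_on (integrableOn_phi_div_sq hz)
        ((integrable_phiPDF.div_const _).integrableOn) measurableSet_Ioi
      intro t ht
      exact div_le_div_of_nonneg_left (phiPDF_pos t).le (by positivity)
        (pow_le_pow_left₀ hz.le (le_of_lt (ht : z < t)) 2)
    rwa [integral_div, ← gTail] at this
  have m1 : (gTail z + I) * z = phiPDF z := by rw [key]; field_simp
  have m2 : I * z ^ 2 ≤ gTail z := by rwa [← le_div_iff₀ (by positivity)]
  rw [div_le_iff₀ (by positivity : (0:ℝ) < 1 + z ^ 2)]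
  nlinarith [m1, m2, gTail_pos z, phiPDF_pos z]

lemma tendsto_gTail : Tendsto gTail atTop (nhds 0) := by
  apply tendsto_of_tendsto_of_tendsto_of_le_of_le' tendsto_const_nhds tendsto_phiPDF
  · exact Eventually.of_forall fun z => (gTail_pos z).le
  · filter_upwards [eventually_ge_atTop 1] with z hz1
    exact (tail_le (lt_of_lt_of_le one_pos hz1)).trans (div_le_self (phiPDF_pos z).le hz1)

lemma tendsto_cdf_one : Tendsto stdNormalCDF atTop (nhds 1) := by
  have h : stdNormalCDF = fun z => 1 - gTail z := by
    funext z; linarith [one_sub_cdf z]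
  rw [h]
  simpa using tendsto_const_nhds.sub tendsto_gTail

lemma tendsto_ratio : Tendsto (fun z => phiPDF z / (z * gTail z)) atTop (nhds 1) := by
  have hupper : Tendsto (fun z : ℝ => 1 + (z ^ 2)⁻¹) atTop (nhds 1) := by
    have : Tendsto (fun z : ℝ => (z ^ 2)⁻¹) atTop (nhds 0) :=
      (tendsto_pow_atTop two_ne_zero).inv_tendsto_atTop
    simpa using tendsto_const_nhds.add this
  apply tendsto_of_tendsto_of_tendsto_of_le_of_le' tendsto_const_nhds hupper
  · filter_upwards [eventually_ge_atTop 1] with z hz1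
    have hz : (0:ℝ) < z := lt_of_lt_of_le one_pos hz1
    have hT := gTail_pos z
    have hm : z * gTail z ≤ phiPDF z := by
      have := tail_le hz
      rw [le_div_iff₀ hz] at this
      linarith [mul_comm z (gTail z)]
    rw [le_div_iff₀ (by positivity : (0:ℝ) < z * gTail z)]
    linarith
  · filter_upwards [eventually_ge_atTop 1] with z hz1
    have hz : (0:ℝ) < z := lt_of_lt_of_le one_pos hz1
    have hT := gTail_pos z
    have hm : z * phiPDF z ≤ gTail z * (1 + z ^ 2) := by
      have := le_tail hz
      rwa [div_le_iff₀ (by positivity : (0:ℝ) < 1 + z ^ 2)] at this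
    rw [div_le_iff₀ (by positivity : (0:ℝ) < z * gTail z)]
    have e : (z ^ 2)⁻¹ * z ^ 2 = 1 := inv_mul_cancel₀ (by positivity)
    nlinarith [hm, e, hz, hT, phiPDF_pos z]

lemma tendsto_sqrt_atTop : Tendsto Real.sqrt atTop atTop := by
  apply (tendsto_rpow_atTop (by norm_num : (0:ℝ) < 1/2)).congr'
  filter_upwards [eventually_ge_atTop (0:ℝ)] with x hx
  exact (Real.sqrt_eq_rpow x).symm

theorem stmt_0 (a b : ℝ) (ha : 0 < a) :
    Tendsto (fun n : ℝ => deriv (fun n : ℝ => logit (stdNormalCDF (a * Real.sqrt n + b))) n)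
      atTop (nhds (a ^ 2 / 2)) := by
  set g : ℝ → ℝ := fun n => a * Real.sqrt n + b with hg
  have hg_top : Tendsto g atTop atTop :=
    tendsto_atTop_add_const_right _ b (_root_.tendsto_sqrt_atTop.const_mul_atTop ha)
  set D : ℝ → ℝ := fun n => a / (2 * Real.sqrt n) * phiPDF (g n) / stdNormalCDF (g n)
      + a / (2 * Real.sqrt n) * phiPDF (g n) / gTail (g n) with hD
  have hsqrt_top : Tendsto (fun n : ℝ => 2 * Real.sqrt n) atTop atTop :=
    _root_.tendsto_sqrt_atTop.const_mul_atTop two_pos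
  -- step 1: the derivative equals D eventually
  have hev : ∀ᶠ n in atTop,
      deriv (fun n : ℝ => logit (stdNormalCDF (a * Real.sqrt n + b))) n = D n := by
    filter_upwards [eventually_gt_atTop (0:ℝ)] with n hn
    have hsne : Real.sqrt n ≠ 0 := (Real.sqrt_pos.mpr hn).ne'
    have hgd : HasDerivAt g (a * (1 / (2 * Real.sqrt n))) n :=
      ((Real.hasDerivAt_sqrt hn.ne').const_mul a).add_const b
    have hcd : HasDerivAt (fun n => stdNormalCDF (g n))
        (phiPDF (g n) * (a * (1 / (2 * Real.sqrt n)))) n :=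
      (hasDerivAt_cdf (g n)).comp n hgd
    have h1 : HasDerivAt (fun n => Real.log (stdNormalCDF (g n)))
        ((stdNormalCDF (g n))⁻¹ * (phiPDF (g n) * (a * (1 / (2 * Real.sqrt n))))) n :=
      by have := (Real.hasDerivAt_log (cdf_pos (g n)).ne').comp n hcd; exact this
    have hone : (0:ℝ) < 1 - stdNormalCDF (g n) := by linarith [cdf_lt_one (g n)]
    have hsub : HasDerivAt (fun n => 1 - stdNormalCDF (g n))
        (-(phiPDF (g n) * (a * (1 / (2 * Real.sqrt n))))) n := by
      have := (hasDerivAt_const n (1:ℝ)).sub hcd; simp only [zero_sub] at this; exact this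
    have h2 : HasDerivAt (fun n => Real.log (1 - stdNormalCDF (g n)))
        ((1 - stdNormalCDF (g n))⁻¹ * (-(phiPDF (g n) * (a * (1 / (2 * Real.sqrt n)))))) n :=
      by have := (Real.hasDerivAt_log hone.ne').comp n hsub; exact this
    have htot : HasDerivAt (fun n => Real.log (stdNormalCDF (g n)) - Real.log (1 - stdNormalCDF (g n))) _ n := h1.sub h2
    have hfun : (fun n : ℝ => logit (stdNormalCDF (a * Real.sqrt n + b)))
        = fun n => Real.log (stdNormalCDF (g n)) - Real.log (1 - stdNormalCDF (g n)) := by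
      funext m; rfl
    rw [hfun, htot.deriv, hD]
    have hTg : gTail (g n) = 1 - stdNormalCDF (g n) := (one_sub_cdf (g n)).symm
    simp only [hTg]
    have hc1 : (stdNormalCDF (g n)) ≠ 0 := (cdf_pos (g n)).ne'
    field_simp
    ring
  -- step 2: D tends to a^2/2
  have hT1 : Tendsto (fun n => a / (2 * Real.sqrt n) * phiPDF (g n) / stdNormalCDF (g n))
      atTop (nhds 0) := by
    have hc : Tendsto (fun n : ℝ => a / (2 * Real.sqrt n)) atTop (nhds 0) :=
      tendsto_const_nhds.div_atTop hsqrt_top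
    have hnum : Tendsto (fun n => a / (2 * Real.sqrt n) * phiPDF (g n)) atTop (nhds 0) := by
      simpa using hc.mul (tendsto_phiPDF.comp hg_top)
    have := hnum.div (tendsto_cdf_one.comp hg_top) one_ne_zero; rw [div_one] at this; exact this
  have hT2 : Tendsto (fun n => a / (2 * Real.sqrt n) * phiPDF (g n) / gTail (g n))
      atTop (nhds (a ^ 2 / 2)) := by
    have hcg : Tendsto (fun n => a / (2 * Real.sqrt n) * g n) atTop (nhds (a ^ 2 / 2)) := by
      have hb0 : Tendsto (fun n : ℝ => a * b / (2 * Real.sqrt n)) atTop (nhds 0) :=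
        tendsto_const_nhds.div_atTop hsqrt_top
      have heq : ∀ᶠ n in atTop, a ^ 2 / 2 + a * b / (2 * Real.sqrt n)
          = a / (2 * Real.sqrt n) * g n := by
        filter_upwards [eventually_gt_atTop (0:ℝ)] with n hn
        have hsne : Real.sqrt n ≠ 0 := (Real.sqrt_pos.mpr hn).ne'
        rw [hg]
        field_simp
      apply Tendsto.congr' heq
      simpa using tendsto_const_nhds.add hb0
    have hr : Tendsto (fun n => phiPDF (g n) / (g n * gTail (g n))) atTop (nhds 1) :=
      tendsto_ratio.comp hg_top
    have heq2 : ∀ᶠ n in atTop,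
        (a / (2 * Real.sqrt n) * g n) * (phiPDF (g n) / (g n * gTail (g n)))
        = a / (2 * Real.sqrt n) * phiPDF (g n) / gTail (g n) := by
      filter_upwards [hg_top.eventually_gt_atTop 0, eventually_gt_atTop (0:ℝ)] with n hgn hn
      have hT := gTail_pos (g n)
      have hsne : Real.sqrt n ≠ 0 := (Real.sqrt_pos.mpr hn).ne'
      field_simp
    apply Tendsto.congr' heq2
    simpa using hcg.mul hr
  have : Tendsto D atTop (nhds (a ^ 2 / 2)) := by
    rw [hD]
    simpa using hT1.add hT2
  exact this.congr' (hev.mono fun n h => h.symm)
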